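/- Let Σ be a finite abstract simplicial complex on a linearly ordered vertex set and k ≥ 0 with deg σ > 0 for all σ ∈ Σ_k. Then Δ_k^up = (k+1)·Δ_{(Γ_k,s)} − k·Id as operators on functions Σ_k → ℝ; consequently, μ is an eigenvalue of Δ_k^up with multiplicity m if and only if (μ + k)/(k+1) is an eigenvalue of Δ_{(Γ_k,s)} with multiplicity m. -/

import Mathlib

open scoped BigOperators

/-- A finite abstract simplicial complex: a collection of nonempty finite vertex sets closed
under taking nonempty subsets. -/
def IsSimplicialComplex {U : Type*} [LinearOrder U] (K : Finset (Finset U)) : Prop :=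
  (∀ σ ∈ K, σ.Nonempty) ∧ ∀ τ ∈ K, ∀ σ ⊆ τ, σ.Nonempty → σ ∈ K

/-- The set `Σ_k` of `k`-simplices (sets of `k+1` vertices) of `K`. -/
def faces {U : Type*} [LinearOrder U] (K : Finset (Finset U)) (k : ℕ) : Finset (Finset U) :=
  K.filter fun σ => σ.card = k + 1

/-- The degree of a simplex `σ`: the number of cofacets of `σ` in `K`. -/
def degS {U : Type*} [LinearOrder U] (K : Finset (Finset U)) (σ : Finset U) : ℕ :=
  (K.filter fun τ => σ ⊆ τ ∧ τ.card = σ.card + 1).card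

/-- The incidence sign `sgn([σ], ∂[τ]) = (−1)^i` when the vertex of `τ` missing from `σ` is the
`(i+1)`-st smallest vertex of `τ` (and `0` if `τ ∖ σ` is not a singleton). -/
def sgnZ {U : Type*} [LinearOrder U] (σ τ : Finset U) : ℤ :=
  ∑ v ∈ τ \ σ, (-1 : ℤ) ^ (τ.filter fun x => x < v).card

/-- The matrix of the normalized up-Laplacian `Δ_k^up` acting on `k`-cochains:
`(Δ_k^up f)(σ) = f(σ) + (1/deg σ) Σ_{σ'≠σ, common cofacet τ} sgn([σ],∂[τ]) sgn([σ'],∂[τ]) f(σ')`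
(each pair of distinct `k`-simplices has at most one common cofacet `τ ∈ Σ_{k+1}`). -/
noncomputable def upLapMatrix {U : Type*} [LinearOrder U] (K : Finset (Finset U)) (k : ℕ) :
    Matrix {σ // σ ∈ faces K k} {σ // σ ∈ faces K k} ℝ :=
  fun σ σ' =>
    if σ = σ' then 1
    else (degS K σ.1 : ℝ)⁻¹ *
      ∑ τ ∈ K.filter (fun τ => τ.card = k + 2 ∧ σ.1 ⊆ τ ∧ σ'.1 ⊆ τ),
        (sgnZ σ.1 τ : ℝ) * (sgnZ σ'.1 τ : ℝ)

/-- The matrix of the normalized Laplacian `Δ_{(Γ_k,s)}` of the signed graph associated with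
`Σ_k`: vertices are the `k`-simplices, two distinct ones adjacent iff they share a cofacet
`τ ∈ Σ_{k+1}`, with sign `s(σ,σ') = −sgn([σ],∂[τ])·sgn([σ'],∂[τ])`, and the degree of `σ` in
`Γ_k` is `(k+1)·deg σ`. -/
noncomputable def signedLapMatrix {U : Type*} [LinearOrder U] (K : Finset (Finset U))
    (k : ℕ) : Matrix {σ // σ ∈ faces K k} {σ // σ ∈ faces K k} ℝ :=
  fun σ σ' =>
    if σ = σ' then 1
    else -((((k : ℝ) + 1) * (degS K σ.1 : ℝ))⁻¹ *
      ∑ τ ∈ K.filter (fun τ => τ.card = k + 2 ∧ σ.1 ⊆ τ ∧ σ'.1 ⊆ τ),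
        -((sgnZ σ.1 τ : ℝ) * (sgnZ σ'.1 τ : ℝ)))

/-- `Δ_k^up = (k+1)·Δ_{(Γ_k,s)} − k·Id`; consequently `μ` is an eigenvalue of `Δ_k^up` with
multiplicity `m` iff `(μ+k)/(k+1)` is an eigenvalue of `Δ_{(Γ_k,s)}` with multiplicity `m`. -/
theorem stmt15 {U : Type*} [LinearOrder U] (K : Finset (Finset U))
    (hK : IsSimplicialComplex K) (k : ℕ)
    (hdeg : ∀ σ ∈ faces K k, 0 < degS K σ) :
    upLapMatrix K k = ((k : ℝ) + 1) • signedLapMatrix K k - (k : ℝ) • 1 ∧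
      ∀ (μ : ℝ) (m : ℕ),
        (Module.End.HasEigenvalue (upLapMatrix K k).mulVecLin μ ∧
            Module.finrank ℝ
              (Module.End.eigenspace (upLapMatrix K k).mulVecLin μ) = m) ↔
          (Module.End.HasEigenvalue (signedLapMatrix K k).mulVecLin
              ((μ + (k : ℝ)) / ((k : ℝ) + 1)) ∧
            Module.finrank ℝ
              (Module.End.eigenspace (signedLapMatrix K k).mulVecLin
                ((μ + (k : ℝ)) / ((k : ℝ) + 1))) = m) := by
  have hk : ((k : ℝ) + 1) ≠ 0 := by positivity
  have hmat : upLapMatrix K k = ((k : ℝ) + 1) • signedLapMatrix K k - (k : ℝ) • 1 := by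
    ext σ σ'
    simp only [upLapMatrix, signedLapMatrix, Matrix.sub_apply, Matrix.smul_apply,
      Matrix.one_apply, smul_eq_mul]
    by_cases h : σ = σ'
    · simp only [h, if_true]; ring
    · simp only [h, if_false, mul_zero, sub_zero]
      rw [Finset.sum_neg_distrib, mul_inv]
      field_simp
  refine ⟨hmat, ?_⟩
  intro μ m
  have hE : Module.End.eigenspace (upLapMatrix K k).mulVecLin μ =
      Module.End.eigenspace (signedLapMatrix K k).mulVecLin ((μ + (k : ℝ)) / ((k : ℝ) + 1)) := by
    ext v
    rw [Module.End.mem_eigenspace_iff, Module.End.mem_eigenspace_iff, hmat]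
    simp only [Matrix.mulVecLin_apply]
    rw [Matrix.sub_mulVec, Matrix.smul_mulVec, Matrix.smul_mulVec,
      Matrix.one_mulVec]
    constructor
    · intro h
      have h2 : ((k : ℝ) + 1) • (signedLapMatrix K k).mulVec v = (μ + (k : ℝ)) • v := by
        rw [sub_eq_iff_eq_add] at h
        rw [h, ← add_smul]
      have h3 := congrArg (fun w => (((k : ℝ) + 1)⁻¹) • w) h2
      simpa [smul_smul, inv_mul_cancel₀ hk, div_eq_inv_mul] using h3
    · intro h
      rw [h, smul_smul, ← sub_smul]
      congr 1
      field_simp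
      ring
  constructor
  · rintro ⟨h1, h2⟩
    exact ⟨by rw [Module.End.hasEigenvalue_iff] at h1 ⊢; rwa [← hE], by rwa [← hE]⟩
  · rintro ⟨h1, h2⟩
    exact ⟨by rw [Module.End.hasEigenvalue_iff] at h1 ⊢; rwa [hE], by rwa [hE]⟩
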